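/- arXiv:1709.06163 — 3 statements merged into one kernel-verified Lean document; each statement's English description precedes it below -/
import Mathlib

section
/- Let r ≥ 1 and m ≥ C(r+1,2) + 1, and let G be a connected finite simple graph with m edges and maximum degree at most r. If G has a cluster T whose common neighborhood S_T has size s ≤ (r + 2)/2, then k_3(G) < f_3(m, r); that is, there exists a graph G' with m edges and maximum degree at most r with k_3(G') > k_3(G). -/
open scoped Classical
open Finset

variable {V : Type} [Fintype V] [DecidableEq V]

/-- A tight clique for the parameter `r`: a complete subgraph `T` all of whose edges `xy` are
tight, i.e. have weight `w(xy) = |N(x) ∩ N(y)| = r − 1`. -/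
def IsTightClique (G : SimpleGraph V) (r : ℕ) (T : Finset V) : Prop :=
  G.IsClique ↑T ∧ ∀ x ∈ T, ∀ y ∈ T, x ≠ y →
    (G.neighborFinset x ∩ G.neighborFinset y).card = r - 1

/-- A cluster: a maximal tight clique. -/
def IsCluster (G : SimpleGraph V) (r : ℕ) (T : Finset V) : Prop :=
  IsTightClique G r T ∧ ∀ T' : Finset V, IsTightClique G r T' → T ⊆ T' → T' = T

/-- `S_T = ⋂_{v ∈ T} N(v)`, the set of common neighbors of the vertices of `T`. -/
noncomputable def commonNbrs (G : SimpleGraph V) (T : Finset V) : Finset V :=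
  Finset.univ.filter fun u => ∀ v ∈ T, G.Adj v u

/-- The red graph `R_T`: the complement of the induced subgraph `G[S]` (for `S = S_T`), viewed
as the graph on `V` whose edges are the non-adjacent pairs of distinct vertices of `S`. -/
def redGraph (G : SimpleGraph V) (S : Finset V) : SimpleGraph V where
  Adj u v := u ∈ S ∧ v ∈ S ∧ u ≠ v ∧ ¬G.Adj u v
  symm := by
    constructor
    intro u v h
    exact ⟨h.2.1, h.1, h.2.2.1.symm, fun h' => h.2.2.2 h'.symm⟩
  loopless := by
    constructor
    intro u h
    exact h.2.2.1 rfl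

/-- A blue edge: an edge of `G` with one endpoint in `S_T` and the other outside `T ∪ S_T`. -/
def IsBlueEdge (G : SimpleGraph V) (T : Finset V) (u v : V) : Prop :=
  G.Adj u v ∧ ((u ∈ commonNbrs G T ∧ v ∉ T ∪ commonNbrs G T) ∨
    (v ∈ commonNbrs G T ∧ u ∉ T ∪ commonNbrs G T))

/-- The graph `B_T` of blue edges. -/
def blueGraph (G : SimpleGraph V) (T : Finset V) : SimpleGraph V where
  Adj u v := IsBlueEdge G T u v
  symm := by
    constructor
    intro u v h
    exact ⟨h.1.symm, h.2.symm⟩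
  loopless := ⟨fun u h => G.irrefl h.1⟩

/-- The folding `G_T` of `G` at the cluster `T`: add all missing pairs inside `S_T` (so that
`T ∪ S_T` induces a complete graph) and delete all blue edges. -/
def folding (G : SimpleGraph V) (T : Finset V) : SimpleGraph V where
  Adj u v := u ≠ v ∧ (G.Adj u v ∨ (u ∈ commonNbrs G T ∧ v ∈ commonNbrs G T)) ∧
    ¬IsBlueEdge G T u v
  symm := by
    constructor
    intro u v h
    obtain ⟨h1, h2, h3⟩ := h
    refine ⟨h1.symm, ?_, ?_⟩
    · rcases h2 with h | h
      · exact Or.inl h.symm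
      · exact Or.inr ⟨h.2, h.1⟩
    · intro hb
      exact h3 ⟨hb.1.symm, hb.2.symm⟩
  loopless := ⟨fun u h => h.1 rfl⟩

set_option linter.unusedSectionVars false

-- basic facts
lemma mem_commonNbrs_iff {G : SimpleGraph V} {T : Finset V} {x : V} :
    x ∈ commonNbrs G T ↔ ∀ v ∈ T, G.Adj v x := by
  simp [commonNbrs]

lemma blue_symm {G : SimpleGraph V} {T : Finset V} {u v : V}
    (h : IsBlueEdge G T u v) : IsBlueEdge G T v u :=
  ⟨h.1.symm, h.2.symm⟩

lemma not_mem_T_of_mem_S {G : SimpleGraph V} {T : Finset V} {x : V}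
    (hx : x ∈ commonNbrs G T) : x ∉ T := by
  intro hxT
  exact G.irrefl (mem_commonNbrs_iff.mp hx x hxT)

lemma disjoint_T_S (G : SimpleGraph V) (T : Finset V) :
    Disjoint T (commonNbrs G T) :=
  Finset.disjoint_left.mpr (fun _ ha hb => not_mem_T_of_mem_S hb ha)

lemma nbhd_of_mem_T {G : SimpleGraph V} {r : ℕ} {T : Finset V}
    (hclique : G.IsClique ↑T) (hΔ : G.maxDegree ≤ r)
    (hTS : T.card + (commonNbrs G T).card = r + 1) {v : V} (hv : v ∈ T) :
    G.neighborFinset v = T.erase v ∪ commonNbrs G T := by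
  have hsub : T.erase v ∪ commonNbrs G T ⊆ G.neighborFinset v := by
    intro y hy
    rw [SimpleGraph.mem_neighborFinset]
    rcases Finset.mem_union.mp hy with hy | hy
    · exact hclique (by simpa using hv) (by simpa using Finset.mem_of_mem_erase hy)
        (Ne.symm (Finset.ne_of_mem_erase hy))
    · exact mem_commonNbrs_iff.mp hy v hv
  have hdisj : Disjoint (T.erase v) (commonNbrs G T) :=
    Finset.disjoint_of_subset_left (Finset.erase_subset _ _) (disjoint_T_S G T)
  have hcard : (T.erase v ∪ commonNbrs G T).card = r := by
    rw [Finset.card_union_of_disjoint hdisj, Finset.card_erase_of_mem hv]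
    have : 1 ≤ T.card := Finset.card_pos.mpr ⟨v, hv⟩
    omega
  have hdeg : (G.neighborFinset v).card ≤ r := by
    rw [← SimpleGraph.degree]
    exact le_trans (G.degree_le_maxDegree v) hΔ
  exact (Finset.eq_of_subset_of_card_le hsub (by omega)).symm

lemma exists_blue {G : SimpleGraph V} {r m : ℕ} {T : Finset V}
    (hm : (r + 1).choose 2 + 1 ≤ m) (hconn : G.Connected)
    (hGm : G.edgeFinset.card = m) (hΔ : G.maxDegree ≤ r)
    (hclique : G.IsClique ↑T)
    (hTS : T.card + (commonNbrs G T).card = r + 1) :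
    ∃ a b, IsBlueEdge G T a b := by
  by_contra hno
  push_neg at hno
  set A := T ∪ commonNbrs G T with hA
  have hstep : ∀ a b : V, a ∈ A → G.Adj a b → b ∈ A := by
    intro a b ha hadj
    rcases Finset.mem_union.mp ha with haT | haS
    · have := nbhd_of_mem_T hclique hΔ hTS haT
      have hb : b ∈ G.neighborFinset a := (SimpleGraph.mem_neighborFinset _ _ _).mpr hadj
      rw [this] at hb
      rcases Finset.mem_union.mp hb with hb | hb
      · exact Finset.mem_union_left _ (Finset.mem_of_mem_erase hb)
      · exact Finset.mem_union_right _ hb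
    · by_contra hbA
      exact hno a b ⟨hadj, Or.inl ⟨haS, hbA⟩⟩
  have hAcard : A.card = r + 1 := by
    rw [hA, Finset.card_union_of_disjoint (disjoint_T_S G T), hTS]
  have hAne : A.Nonempty := Finset.card_pos.mp (by omega)
  obtain ⟨a₀, ha₀⟩ := hAne
  have key : ∀ (a y : V) (w : G.Walk a y), a ∈ A → y ∈ A := by
    intro a y w
    induction w with
    | nil => exact id
    | cons hadj p ih => exact fun ha => ih (hstep _ _ ha hadj)
  have hall : ∀ y : V, y ∈ A := by
    intro y
    obtain ⟨w⟩ := hconn.preconnected a₀ y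
    exact key _ _ w ha₀
  have huniv : (Finset.univ : Finset V) = A :=
    (Finset.eq_of_subset_of_card_le (fun y _ => hall y)
      (Finset.card_le_card (Finset.subset_univ A)))
  have hcardV : Fintype.card V = r + 1 := by
    rw [← Finset.card_univ, huniv, hAcard]
  have := G.card_edgeFinset_le_card_choose_two
  rw [hGm, hcardV] at this
  omega

set_option linter.unusedSectionVars false

lemma blue_of_S {G : SimpleGraph V} {T : Finset V} {x y : V}
    (hx : x ∈ commonNbrs G T) (h : IsBlueEdge G T x y) :
    G.Adj x y ∧ y ∉ T ∪ commonNbrs G T := by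
  rcases h.2 with h2 | h2
  · exact ⟨h.1, h2.2⟩
  · exact absurd (Finset.mem_union_right _ hx) h2.2

lemma blue_iff_of_S {G : SimpleGraph V} {T : Finset V} {x y : V}
    (hx : x ∈ commonNbrs G T) :
    IsBlueEdge G T x y ↔ G.Adj x y ∧ y ∉ T ∪ commonNbrs G T := by
  constructor
  · exact blue_of_S hx
  · exact fun h => ⟨h.1, Or.inl ⟨hx, h.2⟩⟩

lemma not_blue_of_mem_TS {G : SimpleGraph V} {T : Finset V} {u v : V}
    (hu : u ∈ T ∪ commonNbrs G T) (hv : v ∈ T ∪ commonNbrs G T) :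
    ¬ IsBlueEdge G T u v := by
  rintro ⟨-, ⟨-, h⟩ | ⟨-, h⟩⟩
  · exact h hv
  · exact h hu

noncomputable def redPairs (G : SimpleGraph V) (S : Finset V) : Finset (Finset V) :=
  ((S ×ˢ S).filter (fun z => z.1 ≠ z.2 ∧ ¬ G.Adj z.1 z.2)).image (fun z => {z.1, z.2})

lemma mem_redPairs_elim {G : SimpleGraph V} {S : Finset V} {q : Finset V}
    (hq : q ∈ redPairs G S) :
    q.card = 2 ∧ q ⊆ S ∧ ∀ a ∈ q, ∀ b ∈ q, a ≠ b → ¬ G.Adj a b := by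
  simp only [redPairs, Finset.mem_image, Finset.mem_filter, Finset.mem_product] at hq
  obtain ⟨⟨a, b⟩, ⟨⟨haS, hbS⟩, hab, hnadj⟩, rfl⟩ := hq
  refine ⟨by rw [Finset.card_insert_of_notMem (by simpa using hab), Finset.card_singleton], ?_, ?_⟩
  · intro x hx
    rcases Finset.mem_insert.mp hx with rfl | hx
    · exact haS
    · rwa [Finset.mem_singleton.mp hx]
  · intro x hx y hy hxy
    rcases Finset.mem_insert.mp hx with rfl | hx <;>
      rcases Finset.mem_insert.mp hy with rfl | hy
    · exact absurd rfl hxy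
    · rwa [Finset.mem_singleton.mp hy]
    · rw [Finset.mem_singleton.mp hx]
      exact fun h => hnadj h.symm
    · rw [Finset.mem_singleton.mp hx, Finset.mem_singleton.mp hy] at hxy
      exact absurd rfl hxy

lemma mem_redPairs_pair {G : SimpleGraph V} {S : Finset V} {u y : V}
    (huS : u ∈ S) (hyS : y ∈ S) (huy : u ≠ y) (hnadj : ¬ G.Adj u y) :
    ({u, y} : Finset V) ∈ redPairs G S := by
  simp only [redPairs, Finset.mem_image, Finset.mem_filter, Finset.mem_product]
  exact ⟨(u, y), ⟨⟨huS, hyS⟩, huy, hnadj⟩, rfl⟩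

/-- The modified graph: on `V`, delete all blue edges and add the red pairs in `R'`;
disjointly, add a perfect matching on `Fin p × Bool`. -/
def foldGraph (G : SimpleGraph V) (T : Finset V) (R' : Finset (Finset V)) (p : ℕ) :
    SimpleGraph (V ⊕ (Fin p × Bool)) where
  Adj w₁ w₂ := match w₁, w₂ with
    | .inl u, .inl v => u ≠ v ∧ ((G.Adj u v ∧ ¬ IsBlueEdge G T u v) ∨ ({u, v} : Finset V) ∈ R')
    | .inr x, .inr y => x.1 = y.1 ∧ x.2 ≠ y.2
    | _, _ => False
  symm := by
    constructor
    rintro (u | x) (v | y) h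
    · obtain ⟨hne, h⟩ := h
      refine ⟨hne.symm, ?_⟩
      rcases h with ⟨hadj, hnb⟩ | hr
      · exact Or.inl ⟨hadj.symm, fun hb => hnb ⟨hb.1.symm, hb.2.symm⟩⟩
      · exact Or.inr (by rwa [Finset.pair_comm])
    · exact h.elim
    · exact h.elim
    · exact ⟨h.1.symm, h.2.symm⟩
  loopless := by
    constructor
    rintro (u | x) h
    · exact h.1 rfl
    · exact h.2 rfl

lemma foldGraph_adj_inl {G : SimpleGraph V} {T : Finset V} {R' : Finset (Finset V)} {p : ℕ}
    {u v : V} : (foldGraph G T R' p).Adj (Sum.inl u) (Sum.inl v) ↔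
      u ≠ v ∧ ((G.Adj u v ∧ ¬ IsBlueEdge G T u v) ∨ ({u, v} : Finset V) ∈ R') := Iff.rfl

lemma foldGraph_adj_inr {G : SimpleGraph V} {T : Finset V} {R' : Finset (Finset V)} {p : ℕ}
    {x y : Fin p × Bool} : (foldGraph G T R' p).Adj (Sum.inr x) (Sum.inr y) ↔
      x.1 = y.1 ∧ x.2 ≠ y.2 := Iff.rfl

lemma foldGraph_adj_mixed {G : SimpleGraph V} {T : Finset V} {R' : Finset (Finset V)} {p : ℕ}
    {u : V} {x : Fin p × Bool} : ¬ (foldGraph G T R' p).Adj (Sum.inl u) (Sum.inr x) ∧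
      ¬ (foldGraph G T R' p).Adj (Sum.inr x) (Sum.inl u) :=
  ⟨fun h => h.elim, fun h => h.elim⟩

section Generic
variable {α : Type*} [DecidableEq α]


lemma pair_complete {q : Finset α} (h2 : q.card = 2) {u : α} (hu : u ∈ q) :
    ∃ y, y ≠ u ∧ q = {u, y} := by
  obtain ⟨a, b, hab, rfl⟩ := Finset.card_eq_two.mp h2
  rcases Finset.mem_insert.mp hu with rfl | hb
  · exact ⟨b, hab.symm, rfl⟩
  · rcases Finset.mem_singleton.mp hb with rfl
    exact ⟨a, hab, Finset.pair_comm a u⟩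

lemma pair_eq_cases {a b u v : α} (hab : a ≠ b) (h : ({u, v} : Finset α) = {a, b}) :
    (u = a ∧ v = b) ∨ (u = b ∧ v = a) := by
  have hu : u ∈ ({a, b} : Finset α) := h ▸ (by simp)
  have hv : v ∈ ({a, b} : Finset α) := h ▸ (by simp)
  have ha : a ∈ ({u, v} : Finset α) := h.symm ▸ (by simp)
  have hb : b ∈ ({u, v} : Finset α) := h.symm ▸ (by simp)
  simp only [Finset.mem_insert, Finset.mem_singleton] at hu hv ha hb
  rcases hu with rfl | rfl <;> rcases hv with rfl | rfl <;> tauto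

lemma sum_pair_count [Fintype α] (Q : Finset (Finset α)) (hQ : ∀ q ∈ Q, q.card = 2) :
    ∑ u : α, (Q.filter (fun q => u ∈ q)).card = 2 * Q.card := by
  have h1 : ∀ u : α, (Q.filter (fun q => u ∈ q)).card = ∑ q ∈ Q, if u ∈ q then 1 else 0 :=
    fun u => Finset.card_filter _ _
  simp only [h1]
  rw [Finset.sum_comm]
  have h2 : ∀ q ∈ Q, (∑ u : α, if u ∈ q then 1 else 0) = 2 := by
    intro q hq
    rw [Finset.sum_boole]
    simp [Finset.filter_univ_mem, hQ q hq]
  rw [Finset.sum_congr rfl h2, Finset.sum_const, smul_eq_mul, mul_comm]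

lemma partner_count [Fintype α] (Q : Finset (Finset α)) (hQ : ∀ q ∈ Q, q.card = 2) (u : α) :
    (Finset.univ.filter (fun y => ({u, y} : Finset α) ∈ Q)).card
      = (Q.filter (fun q => u ∈ q)).card := by
  apply Finset.card_bij (fun y _ => ({u, y} : Finset α))
  · intro y hy
    simp only [Finset.mem_filter, Finset.mem_univ, true_and] at hy ⊢
    exact ⟨hy, by simp⟩
  · intro y1 h1 y2 h2 heq
    simp only [Finset.mem_filter, Finset.mem_univ, true_and] at h1 h2
    have h2c : ({u, y1} : Finset α).card = 2 := hQ _ h1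
    have hy1u : y1 ≠ u := by
      rintro rfl
      simp at h2c
    have : y1 ∈ ({u, y2} : Finset α) := heq ▸ (by simp)
    simp only [Finset.mem_insert, Finset.mem_singleton] at this
    tauto
  · intro q hq
    simp only [Finset.mem_filter] at hq
    obtain ⟨y, hyu, rfl⟩ := pair_complete (hQ q hq.1) hq.2
    exact ⟨y, by simp [hq.1], rfl⟩

lemma sum_count_eq_card_pairs [Fintype α] (A : Finset α) (P : α → α → Prop) :
    ∑ u ∈ A, (Finset.univ.filter (fun y => P u y)).card
      = ((A ×ˢ Finset.univ).filter (fun z => P z.1 z.2)).card := by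
  rw [Finset.card_eq_sum_card_fiberwise (f := Prod.fst) (t := A)
    (by intro z hz; simp only [Finset.mem_coe, Finset.mem_filter, Finset.mem_product] at hz; exact hz.1.1)]
  apply Finset.sum_congr rfl
  intro u hu
  apply Finset.card_bij (fun y _ => ((u, y) : α × α))
  · intro y hy
    simp only [Finset.mem_filter, Finset.mem_univ, true_and] at hy
    simp [Finset.mem_filter, Finset.mem_product, hu, hy]
  · intro y1 h1 y2 h2 heq
    exact congrArg Prod.snd heq
  · intro z hz
    simp only [Finset.mem_filter, Finset.mem_product] at hz
    obtain ⟨⟨⟨_, _⟩, hP⟩, hfst⟩ := hz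
    exact ⟨z.2, by simp only [Finset.mem_filter, Finset.mem_univ, true_and]; exact hfst ▸ hP,
      by rw [← hfst]⟩

end Generic
section T4
variable {V : Type} [Fintype V] [DecidableEq V]

/-- blue neighbours of a vertex -/
noncomputable def blueNbrs (G : SimpleGraph V) (T : Finset V) (u : V) : Finset V :=
  Finset.univ.filter (fun y => IsBlueEdge G T u y)

lemma blueNbrs_subset (G : SimpleGraph V) (T : Finset V) (u : V) :
    blueNbrs G T u ⊆ G.neighborFinset u := by
  intro y hy
  simp only [blueNbrs, Finset.mem_filter] at hy
  exact (SimpleGraph.mem_neighborFinset _ _ _).mpr hy.2.1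

lemma fold_nbr_inr {G : SimpleGraph V} {T : Finset V} {R' : Finset (Finset V)} {p : ℕ}
    (x : Fin p × Bool) :
    (foldGraph G T R' p).neighborFinset (Sum.inr x) = {Sum.inr (x.1, !x.2)} := by
  ext w
  rw [SimpleGraph.mem_neighborFinset]
  rcases w with u | ⟨c, d⟩
  · simp only [Finset.mem_singleton]
    exact ⟨fun h => h.elim, fun h => by simp at h⟩
  · rw [foldGraph_adj_inr]
    obtain ⟨a, b⟩ := x
    simp only [Finset.mem_singleton, Sum.inr.injEq, Prod.mk.injEq]
    constructor
    · rintro ⟨rfl, hbd⟩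
      exact ⟨rfl, by cases b <;> cases d <;> simp_all⟩
    · rintro ⟨rfl, rfl⟩
      exact ⟨rfl, by cases b <;> simp⟩

lemma fold_degree_inr {G : SimpleGraph V} {T : Finset V} {R' : Finset (Finset V)} {p : ℕ}
    (x : Fin p × Bool) : (foldGraph G T R' p).degree (Sum.inr x) = 1 := by
  rw [← SimpleGraph.card_neighborFinset_eq_degree, fold_nbr_inr]
  simp

lemma fold_nbr_inl {G : SimpleGraph V} {T : Finset V} {R' : Finset (Finset V)} {p : ℕ}
    (hR' : R' ⊆ redPairs G (commonNbrs G T)) (u : V) :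
    (foldGraph G T R' p).neighborFinset (Sum.inl u) =
      ((G.neighborFinset u \ blueNbrs G T u) ∪
        (Finset.univ.filter (fun y => ({u, y} : Finset V) ∈ R'))).image Sum.inl := by
  ext w
  rw [SimpleGraph.mem_neighborFinset]
  rcases w with y | x
  · rw [foldGraph_adj_inl]
    simp only [Finset.mem_image, Finset.mem_union, Finset.mem_sdiff, Finset.mem_filter,
      Finset.mem_univ, true_and, Sum.inl.injEq, SimpleGraph.mem_neighborFinset, blueNbrs]
    constructor
    · rintro ⟨hne, ⟨hadj, hnb⟩ | hr⟩
      · exact ⟨y, Or.inl ⟨hadj, by simp [hne, hnb]⟩, rfl⟩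
      · exact ⟨y, Or.inr hr, rfl⟩
    · rintro ⟨y', hy', rfl⟩
      rcases hy' with ⟨hadj, hnb⟩ | hr
      · exact ⟨hadj.ne, Or.inl ⟨hadj, by simpa using hnb⟩⟩
      · have h2 := (mem_redPairs_elim (hR' hr)).1
        have hne : u ≠ y' := by
          rintro rfl
          simp at h2
        exact ⟨hne, Or.inr hr⟩
  · simp only [Finset.mem_image]
    exact ⟨fun h => h.elim, fun ⟨y', _, h⟩ => by simp at h⟩

lemma fold_degree_inl {G : SimpleGraph V} {T : Finset V} {R' : Finset (Finset V)} {p : ℕ}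
    (hR' : R' ⊆ redPairs G (commonNbrs G T)) (u : V) :
    (foldGraph G T R' p).degree (Sum.inl u) + (blueNbrs G T u).card =
      G.degree u + (R'.filter (fun q => u ∈ q)).card := by
  have hd : ∀ q ∈ R', q.card = 2 := fun q hq => (mem_redPairs_elim (hR' hq)).1
  rw [← SimpleGraph.card_neighborFinset_eq_degree, fold_nbr_inl hR',
    Finset.card_image_of_injective _ Sum.inl_injective]
  have hdisj : Disjoint (G.neighborFinset u \ blueNbrs G T u)
      (Finset.univ.filter (fun y => ({u, y} : Finset V) ∈ R')) := by
    rw [Finset.disjoint_right]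
    intro y hy hy2
    simp only [Finset.mem_filter, Finset.mem_univ, true_and] at hy
    obtain ⟨-, -, hna⟩ := mem_redPairs_elim (hR' hy)
    have h2 : ({u, y} : Finset V).card = 2 := hd _ hy
    have hne : u ≠ y := by rintro rfl; simp at h2
    have : ¬ G.Adj u y := hna u (by simp) y (by simp) hne
    rw [Finset.mem_sdiff, SimpleGraph.mem_neighborFinset] at hy2
    exact this hy2.1
  rw [Finset.card_union_of_disjoint hdisj,
    Finset.card_sdiff_of_subset (blueNbrs_subset G T u), partner_count R' hd u]
  have hle : (blueNbrs G T u).card ≤ (G.neighborFinset u).card :=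
    Finset.card_le_card (blueNbrs_subset G T u)
  rw [← SimpleGraph.card_neighborFinset_eq_degree]
  omega

/-- For `u ∈ S`, the non-blue neighbours are exactly `T` plus the `S`-neighbours. -/
lemma nonblue_nbrs_of_S {G : SimpleGraph V} {T : Finset V} {u : V}
    (hu : u ∈ commonNbrs G T) :
    G.neighborFinset u \ blueNbrs G T u =
      T ∪ ((commonNbrs G T).erase u ∩ G.neighborFinset u) := by
  ext y
  simp only [Finset.mem_sdiff, Finset.mem_union, Finset.mem_inter, Finset.mem_erase,
    SimpleGraph.mem_neighborFinset, blueNbrs, Finset.mem_filter, Finset.mem_univ, true_and]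
  constructor
  · rintro ⟨hadj, hnb⟩
    have : y ∈ T ∪ commonNbrs G T := by
      by_contra hy
      exact hnb ⟨hadj, Or.inl ⟨hu, hy⟩⟩
    rcases Finset.mem_union.mp this with hy | hy
    · exact Or.inl hy
    · exact Or.inr ⟨⟨hadj.ne', hy⟩, hadj⟩
  · rintro (hy | ⟨⟨hne, hy⟩, hadj⟩)
    · refine ⟨(mem_commonNbrs_iff.mp hu y hy).symm, ?_⟩
      exact not_blue_of_mem_TS (Finset.mem_union_right _ hu) (Finset.mem_union_left _ hy)
    · exact ⟨hadj, not_blue_of_mem_TS (Finset.mem_union_right _ hu) (Finset.mem_union_right _ hy)⟩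

/-- degree partition inequality for `u ∈ S`. -/
lemma S_degree_partition {G : SimpleGraph V} {T : Finset V} {u : V}
    (hu : u ∈ commonNbrs G T) :
    T.card + ((commonNbrs G T).erase u ∩ G.neighborFinset u).card + (blueNbrs G T u).card
      ≤ G.degree u := by
  have h1 : T ∪ ((commonNbrs G T).erase u ∩ G.neighborFinset u) ∪ blueNbrs G T u
      ⊆ G.neighborFinset u := by
    intro y hy
    rcases Finset.mem_union.mp hy with hy | hy
    · rcases Finset.mem_union.mp hy with hy | hy
      · exact (SimpleGraph.mem_neighborFinset _ _ _).mpr (mem_commonNbrs_iff.mp hu y hy).symm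
      · exact (Finset.mem_inter.mp hy).2
    · exact blueNbrs_subset G T u hy
  have hd1 : Disjoint T ((commonNbrs G T).erase u ∩ G.neighborFinset u) :=
    Finset.disjoint_of_subset_right
      (le_trans Finset.inter_subset_left (Finset.erase_subset _ _)) (disjoint_T_S G T)
  have hd2 : Disjoint (T ∪ ((commonNbrs G T).erase u ∩ G.neighborFinset u)) (blueNbrs G T u) := by
    rw [Finset.disjoint_right]
    intro y hy hy2
    simp only [blueNbrs, Finset.mem_filter, Finset.mem_univ, true_and] at hy
    have hout := (blue_of_S hu hy).2
    rcases Finset.mem_union.mp hy2 with h | h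
    · exact hout (Finset.mem_union_left _ h)
    · exact hout (Finset.mem_union_right _ (Finset.mem_of_mem_erase (Finset.mem_inter.mp h).1))
  calc T.card + ((commonNbrs G T).erase u ∩ G.neighborFinset u).card + (blueNbrs G T u).card
      = (T ∪ ((commonNbrs G T).erase u ∩ G.neighborFinset u) ∪ blueNbrs G T u).card := by
        rw [Finset.card_union_of_disjoint hd2, Finset.card_union_of_disjoint hd1]
    _ ≤ (G.neighborFinset u).card := Finset.card_le_card h1
    _ = G.degree u := (SimpleGraph.card_neighborFinset_eq_degree _ _)

end T4
section T5
variable {V : Type} [Fintype V] [DecidableEq V]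

lemma exists_third {q : Finset V} (h3 : q.card = 3) {a b : V} (ha : a ∈ q) (hb : b ∈ q)
    (hab : a ≠ b) : ∃ c, c ∈ q ∧ c ≠ a ∧ c ≠ b := by
  have hb' : b ∈ q.erase a := Finset.mem_erase.mpr ⟨hab.symm, hb⟩
  have hcard : ((q.erase a).erase b).card = 1 := by
    rw [Finset.card_erase_of_mem hb', Finset.card_erase_of_mem ha, h3]
  have hpos : 0 < ((q.erase a).erase b).card := by omega
  obtain ⟨c, hc⟩ := Finset.card_pos.mp hpos
  rw [Finset.mem_erase, Finset.mem_erase] at hc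
  exact ⟨c, hc.2.2, hc.2.1, hc.1⟩

lemma eq_triple {q : Finset V} (h3 : q.card = 3) {a b c : V} (ha : a ∈ q) (hb : b ∈ q)
    (hc : c ∈ q) (hab : a ≠ b) (hac : a ≠ c) (hbc : b ≠ c) : q = {a, b, c} := by
  have hsub : ({a, b, c} : Finset V) ⊆ q := by
    intro x hx
    rcases Finset.mem_insert.mp hx with rfl | hx
    · exact ha
    rcases Finset.mem_insert.mp hx with rfl | hx
    · exact hb
    · rwa [Finset.mem_singleton.mp hx]
  have hcard : ({a, b, c} : Finset V).card = 3 := by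
    rw [Finset.card_insert_of_notMem (by simp [hab, hac]),
      Finset.card_insert_of_notMem (by simp [hbc]), Finset.card_singleton]
  exact (Finset.eq_of_subset_of_card_le hsub (by omega)).symm

lemma blue_common_bound {G : SimpleGraph V} {r : ℕ} {T : Finset V}
    (hclique : G.IsClique ↑T) (hΔ : G.maxDegree ≤ r)
    (hTS : T.card + (commonNbrs G T).card = r + 1)
    {x y : V} (hx : x ∈ commonNbrs G T) (hadj : G.Adj x y)
    (hyOut : y ∉ T ∪ commonNbrs G T) :
    (G.neighborFinset x ∩ G.neighborFinset y).card + T.card + 1 ≤ r := by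
  have hsub : (G.neighborFinset x ∩ G.neighborFinset y) ∪ (T ∪ {y}) ⊆ G.neighborFinset x := by
    intro c hc
    rcases Finset.mem_union.mp hc with hc | hc
    · exact (Finset.mem_inter.mp hc).1
    rcases Finset.mem_union.mp hc with hc | hc
    · exact (SimpleGraph.mem_neighborFinset _ _ _).mpr (mem_commonNbrs_iff.mp hx c hc).symm
    · rw [Finset.mem_singleton.mp hc]
      exact (SimpleGraph.mem_neighborFinset _ _ _).mpr hadj
  have hdTy : Disjoint T ({y} : Finset V) := by
    rw [Finset.disjoint_right]
    intro c hc
    rw [Finset.mem_singleton.mp hc]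
    exact fun hyT => hyOut (Finset.mem_union_left _ hyT)
  have hdisj : Disjoint (G.neighborFinset x ∩ G.neighborFinset y) (T ∪ {y}) := by
    rw [Finset.disjoint_left]
    intro c hc hc2
    rw [Finset.mem_inter] at hc
    rcases Finset.mem_union.mp hc2 with hcT | hcy
    · -- c ∈ T and y ∈ N(c) : contradiction with y ∉ T ∪ S
      have hyNc : y ∈ G.neighborFinset c :=
        (SimpleGraph.mem_neighborFinset _ _ _).mpr
          ((SimpleGraph.mem_neighborFinset _ _ _).mp hc.2).symm
      rw [nbhd_of_mem_T hclique hΔ hTS hcT] at hyNc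
      rcases Finset.mem_union.mp hyNc with h | h
      · exact hyOut (Finset.mem_union_left _ (Finset.mem_of_mem_erase h))
      · exact hyOut (Finset.mem_union_right _ h)
    · rw [Finset.mem_singleton.mp hcy] at hc
      exact G.irrefl ((SimpleGraph.mem_neighborFinset _ _ _).mp hc.2)
  have hcards := Finset.card_le_card hsub
  rw [Finset.card_union_of_disjoint hdisj, Finset.card_union_of_disjoint hdTy,
    Finset.card_singleton] at hcards
  have hdeg : (G.neighborFinset x).card ≤ r := by
    rw [SimpleGraph.card_neighborFinset_eq_degree]
    exact le_trans (G.degree_le_maxDegree x) hΔ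
  omega

lemma lost_fiber_le {G : SimpleGraph V} {r : ℕ} {T : Finset V}
    (hclique : G.IsClique ↑T) (hΔ : G.maxDegree ≤ r)
    (hTS : T.card + (commonNbrs G T).card = r + 1)
    {z : V × V} (hz : IsBlueEdge G T z.1 z.2) (L : Finset (Finset V))
    (hL : ∀ q ∈ L, G.IsNClique 3 q) :
    (L.filter (fun q => z.1 ∈ q ∧ z.2 ∈ q)).card + T.card + 1 ≤ r := by
  have hne : z.1 ≠ z.2 := hz.1.ne
  have hkey : (L.filter (fun q => z.1 ∈ q ∧ z.2 ∈ q)).card ≤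
      (G.neighborFinset z.1 ∩ G.neighborFinset z.2).card := by
    apply Finset.card_le_card_of_injOn
      (fun q => if h : ((q.erase z.1).erase z.2).Nonempty then h.choose else z.1)
    · intro q hq
      rw [Finset.mem_coe, Finset.mem_filter] at hq
      obtain ⟨hqL, hz1, hz2⟩ := hq
      have h3 := (hL q hqL).card_eq
      have hz2' : z.2 ∈ q.erase z.1 := Finset.mem_erase.mpr ⟨hne.symm, hz2⟩
      have hcard : ((q.erase z.1).erase z.2).card = 1 := by
        rw [Finset.card_erase_of_mem hz2', Finset.card_erase_of_mem hz1, h3]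
      have hpos : 0 < ((q.erase z.1).erase z.2).card := by omega
      have hnonempty : ((q.erase z.1).erase z.2).Nonempty := Finset.card_pos.mp hpos
      show (if h : ((q.erase z.1).erase z.2).Nonempty then h.choose else z.1) ∈ _
      rw [dif_pos hnonempty]
      have hc := hnonempty.choose_spec
      rw [Finset.mem_erase, Finset.mem_erase] at hc
      obtain ⟨hcz2, hcz1, hcq⟩ := hc
      rw [Finset.mem_coe, Finset.mem_inter, SimpleGraph.mem_neighborFinset, SimpleGraph.mem_neighborFinset]
      exact ⟨(hL q hqL).isClique (by simpa using hz1) (by simpa using hcq) (Ne.symm hcz1),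
        (hL q hqL).isClique (by simpa using hz2) (by simpa using hcq) (Ne.symm hcz2)⟩
    · intro q1 hq1 q2 hq2 heq
      simp only [Finset.coe_filter, Set.mem_setOf_eq] at hq1 hq2
      obtain ⟨hq1L, h11, h12⟩ := hq1
      obtain ⟨hq2L, h21, h22⟩ := hq2
      -- identify third vertices
      have hthird : ∀ q, q ∈ L → z.1 ∈ q → z.2 ∈ q →
          ∃ h : ((q.erase z.1).erase z.2).Nonempty,
            (if h : ((q.erase z.1).erase z.2).Nonempty then h.choose else z.1) = h.choose := by
        intro q hqL hz1 hz2
        have h3 := (hL q hqL).card_eq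
        have hz2' : z.2 ∈ q.erase z.1 := Finset.mem_erase.mpr ⟨hne.symm, hz2⟩
        have hcard : ((q.erase z.1).erase z.2).card = 1 := by
          rw [Finset.card_erase_of_mem hz2', Finset.card_erase_of_mem hz1, h3]
        have hpos : 0 < ((q.erase z.1).erase z.2).card := by omega
        have hnonempty : ((q.erase z.1).erase z.2).Nonempty := Finset.card_pos.mp hpos
        exact ⟨hnonempty, dif_pos hnonempty⟩
      obtain ⟨he1, hv1⟩ := hthird q1 hq1L h11 h12
      obtain ⟨he2, hv2⟩ := hthird q2 hq2L h21 h22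
      replace heq : (if h : ((q1.erase z.1).erase z.2).Nonempty then h.choose else z.1)
          = (if h : ((q2.erase z.1).erase z.2).Nonempty then h.choose else z.1) := heq
      rw [hv1] at heq
      rw [hv2] at heq
      have hc1 := he1.choose_spec
      have hc2 := he2.choose_spec
      rw [Finset.mem_erase, Finset.mem_erase] at hc1 hc2
      have hq1e : q1 = {z.1, z.2, he1.choose} :=
        eq_triple (hL q1 hq1L).card_eq h11 h12 hc1.2.2 hne (Ne.symm hc1.2.1) (Ne.symm hc1.1)
      have hq2e : q2 = {z.1, z.2, he2.choose} :=
        eq_triple (hL q2 hq2L).card_eq h21 h22 hc2.2.2 hne (Ne.symm hc2.2.1) (Ne.symm hc2.1)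
      rw [hq1e, hq2e, heq]
  rcases hz.2 with ⟨h1S, h2Out⟩ | ⟨h2S, h1Out⟩
  · have := blue_common_bound hclique hΔ hTS h1S hz.1 h2Out
    omega
  · have := blue_common_bound hclique hΔ hTS h2S hz.1.symm h1Out
    rw [Finset.inter_comm] at this
    omega

end T5
section T6
variable {V : Type} [Fintype V] [DecidableEq V]

lemma lost_four {G : SimpleGraph V} {r : ℕ} {T : Finset V}
    (hclique : G.IsClique ↑T) (hΔ : G.maxDegree ≤ r)
    (hTS : T.card + (commonNbrs G T).card = r + 1)
    {q : Finset V} (hq : G.IsNClique 3 q) {a b : V} (ha : a ∈ q) (hb : b ∈ q)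
    (hblue : IsBlueEdge G T a b) :
    4 ≤ (((Finset.univ ×ˢ Finset.univ).filter (fun z : V × V => IsBlueEdge G T z.1 z.2)).filter
      (fun z => z.1 ∈ q ∧ z.2 ∈ q)).card := by
  -- orient the blue edge
  obtain ⟨x, y, hxq, hyq, hxy, hxS, hyOut⟩ :
      ∃ x y, x ∈ q ∧ y ∈ q ∧ G.Adj x y ∧ x ∈ commonNbrs G T ∧ y ∉ T ∪ commonNbrs G T := by
    rcases hblue.2 with ⟨h1, h2⟩ | ⟨h1, h2⟩
    · exact ⟨a, b, ha, hb, hblue.1, h1, h2⟩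
    · exact ⟨b, a, hb, ha, hblue.1.symm, h1, h2⟩
  obtain ⟨c, hcq, hcx, hcy⟩ := exists_third hq.card_eq hxq hyq hxy.ne
  have hadjcy : G.Adj c y := hq.isClique (by simpa using hcq) (by simpa using hyq) hcy
  have hadjxc : G.Adj x c := hq.isClique (by simpa using hxq) (by simpa using hcq) (Ne.symm hcx)
  have hcT : c ∉ T := by
    intro hcT
    have : y ∈ G.neighborFinset c := (SimpleGraph.mem_neighborFinset _ _ _).mpr hadjcy
    rw [nbhd_of_mem_T hclique hΔ hTS hcT] at this
    rcases Finset.mem_union.mp this with h | h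
    · exact hyOut (Finset.mem_union_left _ (Finset.mem_of_mem_erase h))
    · exact hyOut (Finset.mem_union_right _ h)
  have hxyne : x ≠ y := hxy.ne
  have hysne : y ∉ commonNbrs G T := fun h => hyOut (Finset.mem_union_right _ h)
  have hxney : x ≠ c := Ne.symm hcx
  by_cases hcS : c ∈ commonNbrs G T
  · -- 4 pairs : (x,y),(y,x),(c,y),(y,c)
    have hbluecy : IsBlueEdge G T c y := ⟨hadjcy, Or.inl ⟨hcS, hyOut⟩⟩
    have hsub : ({(x,y),(y,x),(c,y),(y,c)} : Finset (V × V)) ⊆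
        ((Finset.univ ×ˢ Finset.univ).filter (fun z : V × V => IsBlueEdge G T z.1 z.2)).filter
          (fun z => z.1 ∈ q ∧ z.2 ∈ q) := by
      intro z hz
      simp only [Finset.mem_insert, Finset.mem_singleton] at hz
      simp only [Finset.mem_filter, Finset.mem_product, Finset.mem_univ, true_and]
      rcases hz with rfl | rfl | rfl | rfl
      · exact ⟨⟨hxy, Or.inl ⟨hxS, hyOut⟩⟩, hxq, hyq⟩
      · exact ⟨⟨hxy.symm, Or.inr ⟨hxS, hyOut⟩⟩, hyq, hxq⟩
      · exact ⟨hbluecy, hcq, hyq⟩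
      · exact ⟨⟨hadjcy.symm, Or.inr ⟨hcS, hyOut⟩⟩, hyq, hcq⟩
    have hcard : ({(x,y),(y,x),(c,y),(y,c)} : Finset (V × V)).card = 4 := by
      rw [Finset.card_insert_of_notMem (by simp [Prod.ext_iff]; tauto),
        Finset.card_insert_of_notMem (by simp [Prod.ext_iff]; tauto),
        Finset.card_insert_of_notMem (by simp [Prod.ext_iff]; tauto),
        Finset.card_singleton]
    calc 4 = ({(x,y),(y,x),(c,y),(y,c)} : Finset (V × V)).card := hcard.symm
      _ ≤ _ := Finset.card_le_card hsub
  · -- c ∉ T ∪ S : pairs (x,y),(y,x),(x,c),(c,x)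
    have hcOut : c ∉ T ∪ commonNbrs G T := by
      intro h
      rcases Finset.mem_union.mp h with h | h
      · exact hcT h
      · exact hcS h
    have hbluexc : IsBlueEdge G T x c := ⟨hadjxc, Or.inl ⟨hxS, hcOut⟩⟩
    have hsub : ({(x,y),(y,x),(x,c),(c,x)} : Finset (V × V)) ⊆
        ((Finset.univ ×ˢ Finset.univ).filter (fun z : V × V => IsBlueEdge G T z.1 z.2)).filter
          (fun z => z.1 ∈ q ∧ z.2 ∈ q) := by
      intro z hz
      simp only [Finset.mem_insert, Finset.mem_singleton] at hz
      simp only [Finset.mem_filter, Finset.mem_product, Finset.mem_univ, true_and]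
      rcases hz with rfl | rfl | rfl | rfl
      · exact ⟨⟨hxy, Or.inl ⟨hxS, hyOut⟩⟩, hxq, hyq⟩
      · exact ⟨⟨hxy.symm, Or.inr ⟨hxS, hyOut⟩⟩, hyq, hxq⟩
      · exact ⟨hbluexc, hxq, hcq⟩
      · exact ⟨⟨hadjxc.symm, Or.inr ⟨hxS, hcOut⟩⟩, hcq, hxq⟩
    have hycne : y ≠ c := Ne.symm hcy
    have hcard : ({(x,y),(y,x),(x,c),(c,x)} : Finset (V × V)).card = 4 := by
      rw [Finset.card_insert_of_notMem (by simp [Prod.ext_iff]; tauto),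
        Finset.card_insert_of_notMem (by simp [Prod.ext_iff]; tauto),
        Finset.card_insert_of_notMem (by simp [Prod.ext_iff]; tauto),
        Finset.card_singleton]
    calc 4 = ({(x,y),(y,x),(x,c),(c,x)} : Finset (V × V)).card := hcard.symm
      _ ≤ _ := Finset.card_le_card hsub

end T6

set_option maxHeartbeats 2000000 in
/-- If `G` is a connected graph with `m ≥ C(r+1,2) + 1` edges and maximum degree at most `r`,
and `G` has a cluster `T` whose common neighborhood `S_T` has size `s ≤ (r + 2)/2`
(i.e. `2s ≤ r + 2`), then `k₃(G) < f₃(m, r)`: some graph `G'` with `m` edges and maximum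
degree at most `r` has strictly more triangles. -/
theorem small_cluster_not_extremal {V : Type} [Fintype V] [DecidableEq V]
    (G : SimpleGraph V) (r m : ℕ) (hr : 1 ≤ r) (hm : (r + 1).choose 2 + 1 ≤ m)
    (hconn : G.Connected)
    (hGm : G.edgeFinset.card = m) (hΔ : G.maxDegree ≤ r)
    (T : Finset V) (hT : IsCluster G r T)
    (hTS : T.card + (commonNbrs G T).card = r + 1)
    (hs : 2 * (commonNbrs G T).card ≤ r + 2) :
    ∃ (n : ℕ) (G' : SimpleGraph (Fin n)),
      G'.edgeFinset.card = m ∧ G'.maxDegree ≤ r ∧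
        (G.cliqueFinset 3).card < (G'.cliqueFinset 3).card := by
  classical
  obtain ⟨⟨hclique, -⟩, -⟩ := hT
  set S : Finset V := commonNbrs G T with hSdef
  -- blue edge exists
  obtain ⟨a₀, b₀, hblue₀⟩ := exists_blue hm hconn hGm hΔ hclique hTS
  -- basic counts
  set B : ℕ := ∑ x ∈ S, (blueNbrs G T x).card with hBdef
  set RP : Finset (Finset V) := redPairs G S with hRPdef
  set R : ℕ := RP.card with hRdef
  have hRP2 : ∀ q ∈ RP, q.card = 2 := fun q hq => (mem_redPairs_elim hq).1
  -- the red-degree of x ∈ S equals the number of red pairs containing x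
  have hrho_eq : ∀ x ∈ S, S.erase x \ G.neighborFinset x =
      Finset.univ.filter (fun y => ({x, y} : Finset V) ∈ RP) := by
    intro x hx
    ext y
    simp only [Finset.mem_sdiff, Finset.mem_erase, Finset.mem_filter, Finset.mem_univ, true_and,
      SimpleGraph.mem_neighborFinset]
    constructor
    · rintro ⟨⟨hyx, hyS⟩, hnadj⟩
      exact mem_redPairs_pair hx hyS (Ne.symm hyx) hnadj
    · intro hmem
      obtain ⟨h2, hsub, hna⟩ := mem_redPairs_elim hmem
      have hxy : x ≠ y := by
        rintro rfl
        simp at h2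
      exact ⟨⟨hxy.symm, hsub (by simp)⟩, hna x (by simp) y (by simp) hxy⟩
  -- blue degree ≤ red degree on S
  have hbl_le_rho : ∀ x ∈ S, (blueNbrs G T x).card ≤ (S.erase x \ G.neighborFinset x).card := by
    intro x hx
    have hpart := S_degree_partition hx
    rw [← hSdef] at hpart
    have hdeg : G.degree x ≤ r := le_trans (G.degree_le_maxDegree x) hΔ
    have hsplit : (S.erase x ∩ G.neighborFinset x).card + (S.erase x \ G.neighborFinset x).card
        = (S.erase x).card := Finset.card_inter_add_card_sdiff _ _
    have hcarderase : (S.erase x).card = S.card - 1 := Finset.card_erase_of_mem hx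
    have hS1 : 1 ≤ S.card := Finset.card_pos.mpr ⟨x, hx⟩
    omega
  have h2R : B ≤ 2 * R := by
    have h1 : ∀ x ∈ S, (S.erase x \ G.neighborFinset x).card
        = (RP.filter (fun q => x ∈ q)).card := by
      intro x hx
      rw [hrho_eq x hx]
      exact partner_count RP hRP2 x
    calc B ≤ ∑ x ∈ S, (S.erase x \ G.neighborFinset x).card :=
            Finset.sum_le_sum hbl_le_rho
      _ = ∑ x ∈ S, (RP.filter (fun q => x ∈ q)).card := Finset.sum_congr rfl h1
      _ ≤ ∑ x : V, (RP.filter (fun q => x ∈ q)).card :=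
            Finset.sum_le_sum_of_subset (Finset.subset_univ S)
      _ = 2 * R := sum_pair_count RP hRP2
  have hB1 : 1 ≤ B := by
    obtain ⟨x, y, hxS, hyOut, hadj⟩ :
        ∃ x y, x ∈ S ∧ y ∉ T ∪ S ∧ G.Adj x y := by
      rcases hblue₀.2 with ⟨h1, h2⟩ | ⟨h1, h2⟩
      · exact ⟨a₀, b₀, h1, h2, hblue₀.1⟩
      · exact ⟨b₀, a₀, h1, h2, hblue₀.1.symm⟩
    have hy : y ∈ blueNbrs G T x := by
      simp only [blueNbrs, Finset.mem_filter, Finset.mem_univ, true_and]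
      exact ⟨hadj, Or.inl ⟨hxS, hyOut⟩⟩
    have h1 : 1 ≤ (blueNbrs G T x).card := Finset.card_pos.mpr ⟨y, hy⟩
    calc 1 ≤ (blueNbrs G T x).card := h1
      _ ≤ B := Finset.single_le_sum (f := fun x => (blueNbrs G T x).card)
          (fun _ _ => Nat.zero_le _) hxS
  have hR1 : 1 ≤ R := by omega
  have hs2 : 2 ≤ S.card := by
    obtain ⟨x, y, hxS, hyOut, hadj⟩ :
        ∃ x y, x ∈ S ∧ y ∉ T ∪ S ∧ G.Adj x y := by
      rcases hblue₀.2 with ⟨h1, h2⟩ | ⟨h1, h2⟩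
      · exact ⟨a₀, b₀, h1, h2, hblue₀.1⟩
      · exact ⟨b₀, a₀, h1, h2, hblue₀.1.symm⟩
    have hy : y ∈ blueNbrs G T x := by
      simp only [blueNbrs, Finset.mem_filter, Finset.mem_univ, true_and]
      exact ⟨hadj, Or.inl ⟨hxS, hyOut⟩⟩
    have h1 : 1 ≤ (blueNbrs G T x).card := Finset.card_pos.mpr ⟨y, hy⟩
    have h2 := hbl_le_rho x hxS
    have h3 : (S.erase x \ G.neighborFinset x).card ≤ (S.erase x).card :=
      Finset.card_le_card (Finset.sdiff_subset)
    have h4 : (S.erase x).card = S.card - 1 := Finset.card_erase_of_mem hxS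
    have hS1 : 1 ≤ S.card := Finset.card_pos.mpr ⟨x, hxS⟩
    omega
  have ht1 : 1 ≤ T.card := by omega
  -- choose the red pairs to add
  set k : ℕ := min R B with hkdef
  obtain ⟨R', hR'sub, hR'card⟩ := Finset.exists_subset_card_eq (show k ≤ RP.card by omega)
  set p : ℕ := B - k with hpdef
  set G' := foldGraph G T R' p with hG'def
  -- ============ degree bound ============
  have hrpc_le : ∀ u ∈ S, (R'.filter (fun q => u ∈ q)).card
      ≤ (S.erase u \ G.neighborFinset u).card := by
    intro u hu
    rw [hrho_eq u hu, partner_count RP hRP2 u]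
    exact Finset.card_le_card (Finset.filter_subset_filter _ hR'sub)
  have hrpc_zero : ∀ u, u ∉ S → (R'.filter (fun q => u ∈ q)).card = 0 := by
    intro u hu
    rw [Finset.card_eq_zero, Finset.filter_eq_empty_iff]
    intro q hq huq
    exact hu ((mem_redPairs_elim (hR'sub hq)).2.1 huq)
  have hR'sub' : R' ⊆ redPairs G (commonNbrs G T) := by rw [← hSdef]; exact hR'sub
  have hdeg' : ∀ w, G'.degree w ≤ r := by
    rintro (u | x)
    · have hfd := fold_degree_inl (p := p) hR'sub' u
      rw [← hG'def] at hfd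
      by_cases hu : u ∈ S
      · have hnb := nonblue_nbrs_of_S (T := T) (by rw [hSdef] at hu; exact hu)
        rw [← hSdef] at hnb
        have hbsub : blueNbrs G T u ⊆ G.neighborFinset u := blueNbrs_subset G T u
        have hsd : (G.neighborFinset u \ blueNbrs G T u).card
            = G.degree u - (blueNbrs G T u).card := by
          rw [Finset.card_sdiff_of_subset hbsub, SimpleGraph.card_neighborFinset_eq_degree]
        have hble : (blueNbrs G T u).card ≤ G.degree u := by
          rw [← SimpleGraph.card_neighborFinset_eq_degree]
          exact Finset.card_le_card hbsub
        have hdisj2 : Disjoint T (S.erase u ∩ G.neighborFinset u) := by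
          rw [hSdef]
          exact Finset.disjoint_of_subset_right
            (le_trans Finset.inter_subset_left (Finset.erase_subset _ _)) (disjoint_T_S G T)
        have hcu : (G.neighborFinset u \ blueNbrs G T u).card
            = T.card + (S.erase u ∩ G.neighborFinset u).card := by
          rw [hnb, Finset.card_union_of_disjoint hdisj2]
        have hsplit : (S.erase u ∩ G.neighborFinset u).card
            + (S.erase u \ G.neighborFinset u).card = (S.erase u).card :=
          Finset.card_inter_add_card_sdiff _ _
        have hcarderase : (S.erase u).card = S.card - 1 := Finset.card_erase_of_mem hu
        have := hrpc_le u hu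
        omega
      · have := hrpc_zero u hu
        have hdeg : G.degree u ≤ r := le_trans (G.degree_le_maxDegree u) hΔ
        omega
    · rw [hG'def, fold_degree_inr]
      exact hr
  have hmax' : G'.maxDegree ≤ r := SimpleGraph.maxDegree_le_of_forall_degree_le _ _ hdeg'
  -- ============ edge count ============
  have hBP : ∑ u : V, (blueNbrs G T u).card = 2 * B := by
    have h1 : ∑ u : V, (blueNbrs G T u).card
        = ((Finset.univ ×ˢ Finset.univ).filter
            (fun z : V × V => IsBlueEdge G T z.1 z.2)).card := by
      have := sum_count_eq_card_pairs (Finset.univ : Finset V)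
        (fun u y => IsBlueEdge G T u y)
      simpa [blueNbrs] using this
    have h2 : ∑ x ∈ S, (blueNbrs G T x).card
        = ((S ×ˢ Finset.univ).filter (fun z : V × V => IsBlueEdge G T z.1 z.2)).card := by
      have := sum_count_eq_card_pairs S (fun u y => IsBlueEdge G T u y)
      simpa [blueNbrs] using this
    set BP := (Finset.univ ×ˢ Finset.univ).filter
      (fun z : V × V => IsBlueEdge G T z.1 z.2) with hBPdef
    have hsplitBP : (BP.filter (fun z => z.1 ∈ S)).card
        + (BP.filter (fun z => ¬ z.1 ∈ S)).card = BP.card :=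
      Finset.card_filter_add_card_filter_not _
    have he1 : BP.filter (fun z => z.1 ∈ S)
        = (S ×ˢ Finset.univ).filter (fun z : V × V => IsBlueEdge G T z.1 z.2) := by
      ext z
      simp only [hBPdef, Finset.mem_filter, Finset.mem_product, Finset.mem_univ, true_and]
      tauto
    have he2 : (BP.filter (fun z => ¬ z.1 ∈ S)).card
        = (BP.filter (fun z => z.1 ∈ S)).card := by
      apply Finset.card_bij (fun z _ => (z.2, z.1))
      · intro z hz
        simp only [hBPdef, Finset.mem_filter, Finset.mem_product, Finset.mem_univ,
          true_and] at hz ⊢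
        obtain ⟨hb, hz1⟩ := hz
        refine ⟨blue_symm hb, ?_⟩
        rcases hb.2 with ⟨hS1, -⟩ | ⟨hS2, -⟩
        · exact absurd (show z.1 ∈ S by rw [hSdef]; exact hS1) hz1
        · rw [hSdef]; exact hS2
      · intro z1 h1 z2 h2 heq
        exact Prod.ext (congrArg Prod.snd heq) (congrArg Prod.fst heq)
      · intro z hz
        simp only [hBPdef, Finset.mem_filter, Finset.mem_product, Finset.mem_univ,
          true_and] at hz
        obtain ⟨hb, h1S⟩ := hz
        refine ⟨(z.2, z.1), ?_, rfl⟩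
        simp only [hBPdef, Finset.mem_filter, Finset.mem_product, Finset.mem_univ, true_and]
        refine ⟨blue_symm hb, ?_⟩
        intro h2S
        have hout := (blue_of_S (show z.1 ∈ commonNbrs G T by rw [← hSdef]; exact h1S) hb).2
        exact hout (Finset.mem_union_right _
          (show z.2 ∈ commonNbrs G T by rw [← hSdef]; exact h2S))
    rw [h1, ← hsplitBP, he2, he1, ← h2]
    omega
  have hE' : G'.edgeFinset.card = m := by
    have hhs := G'.sum_degrees_eq_twice_card_edges
    rw [Fintype.sum_sum_type] at hhs
    have hinr : ∑ x : Fin p × Bool, G'.degree (Sum.inr x) = 2 * p := by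
      have : ∀ x : Fin p × Bool, G'.degree (Sum.inr x) = 1 := by
        intro x
        rw [hG'def, fold_degree_inr]
      rw [Finset.sum_congr rfl (fun x _ => this x), Finset.sum_const, smul_eq_mul, mul_one]
      simp [Fintype.card_prod]
      ring
    have hinl : (∑ u : V, G'.degree (Sum.inl u)) + 2 * B = 2 * m + 2 * k := by
      have hcongr : ∀ u : V, G'.degree (Sum.inl u) + (blueNbrs G T u).card
          = G.degree u + (R'.filter (fun q => u ∈ q)).card := by
        intro u
        rw [hG'def]
        exact fold_degree_inl hR'sub' u
      have hsum : ∑ u : V, (G'.degree (Sum.inl u) + (blueNbrs G T u).card)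
          = ∑ u : V, (G.degree u + (R'.filter (fun q => u ∈ q)).card) :=
        Finset.sum_congr rfl (fun u _ => hcongr u)
      rw [Finset.sum_add_distrib, Finset.sum_add_distrib, hBP] at hsum
      have hdegsum : ∑ u : V, G.degree u = 2 * m := by
        rw [G.sum_degrees_eq_twice_card_edges, hGm]
      have hrpsum : ∑ u : V, (R'.filter (fun q => u ∈ q)).card = 2 * k := by
        rw [sum_pair_count R' (fun q hq => hRP2 q (hR'sub hq)), hR'card]
      omega
    have hkB : k ≤ B := min_le_right R B
    omega
    -- ============ triangles : lost ============
  set BP := (Finset.univ ×ˢ Finset.univ).filter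
    (fun z : V × V => IsBlueEdge G T z.1 z.2) with hBPdef
  have hBPcard : BP.card = 2 * B := by
    have h1 : ∑ u : V, (blueNbrs G T u).card = BP.card := by
      have := sum_count_eq_card_pairs (Finset.univ : Finset V)
        (fun u y => IsBlueEdge G T u y)
      simpa [blueNbrs, hBPdef] using this
    omega
  set G3 := G.cliqueFinset 3 with hG3def
  set Surv := G3.filter (fun q => ∀ a ∈ q, ∀ b ∈ q, ¬ IsBlueEdge G T a b) with hSurvdef
  set Lost := G3.filter (fun q => ¬ ∀ a ∈ q, ∀ b ∈ q, ¬ IsBlueEdge G T a b) with hLostdef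
  have hsplit3 : Surv.card + Lost.card = G3.card :=
    Finset.card_filter_add_card_filter_not _
  have hLost3 : ∀ q ∈ Lost, G.IsNClique 3 q := by
    intro q hq
    rw [hLostdef, Finset.mem_filter] at hq
    exact SimpleGraph.mem_cliqueFinset_iff.mp (by rw [← hG3def]; exact hq.1)
  set Inc := (BP ×ˢ Lost).filter
    (fun e : (V × V) × Finset V => e.1.1 ∈ e.2 ∧ e.1.2 ∈ e.2) with hIncdef
  have hIncUpper : Inc.card ≤ 2 * B * (S.card - 2) := by
    rw [Finset.card_eq_sum_card_fiberwise (f := fun e => e.1) (s := Inc) (t := BP)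
      (by intro e he
          rw [Finset.mem_coe, hIncdef, Finset.mem_filter, Finset.mem_product] at he
          exact he.1.1)]
    have hfib : ∀ z ∈ BP, (Inc.filter (fun e => e.1 = z)).card ≤ S.card - 2 := by
      intro z hz
      have hzBP := hz
      rw [hBPdef, Finset.mem_filter] at hz
      have hbz : IsBlueEdge G T z.1 z.2 := hz.2
      have hcard_eq : (Inc.filter (fun e => e.1 = z)).card
          = (Lost.filter (fun q => z.1 ∈ q ∧ z.2 ∈ q)).card := by
        apply Finset.card_bij (fun e _ => e.2)
        · intro e he
          simp only [Finset.mem_filter, hIncdef, Finset.mem_product] at he ⊢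
          obtain ⟨⟨⟨heBP, heL⟩, hm1, hm2⟩, hez⟩ := he
          rw [hez] at hm1 hm2
          exact ⟨heL, hm1, hm2⟩
        · intro e1 h1 e2 h2 heq
          simp only [Finset.mem_filter] at h1 h2
          exact Prod.ext (h1.2.trans h2.2.symm) heq
        · intro q hq
          simp only [Finset.mem_filter] at hq
          refine ⟨(z, q), Finset.mem_filter.mpr ⟨?_, rfl⟩, rfl⟩
          rw [hIncdef, Finset.mem_filter, Finset.mem_product]
          exact ⟨⟨hzBP, hq.1⟩, hq.2.1, hq.2.2⟩
      have hble := lost_fiber_le hclique hΔ hTS hbz Lost hLost3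
      omega
    calc ∑ z ∈ BP, (Inc.filter (fun e => e.1 = z)).card
        ≤ ∑ _z ∈ BP, (S.card - 2) := Finset.sum_le_sum hfib
      _ = BP.card * (S.card - 2) := by rw [Finset.sum_const, smul_eq_mul]
      _ = 2 * B * (S.card - 2) := by rw [hBPcard]
  have hIncLower : 4 * Lost.card ≤ Inc.card := by
    rw [Finset.card_eq_sum_card_fiberwise (f := fun e => e.2) (s := Inc) (t := Lost)
      (by intro e he
          rw [Finset.mem_coe, hIncdef, Finset.mem_filter, Finset.mem_product] at he
          exact he.1.2)]
    have hfib : ∀ q ∈ Lost, 4 ≤ (Inc.filter (fun e => e.2 = q)).card := by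
      intro q hq
      have hq' := hq
      rw [hLostdef, Finset.mem_filter] at hq'
      push_neg at hq'
      obtain ⟨hqG3, a, ha, b, hb, hab⟩ := hq'
      have hqNC : G.IsNClique 3 q := hLost3 q hq
      have h4 := lost_four hclique hΔ hTS hqNC ha hb hab
      have hcard_eq : (Inc.filter (fun e => e.2 = q)).card
          = (BP.filter (fun z => z.1 ∈ q ∧ z.2 ∈ q)).card := by
        apply Finset.card_bij (fun e _ => e.1)
        · intro e he
          simp only [Finset.mem_filter, hIncdef, Finset.mem_product] at he ⊢
          obtain ⟨⟨⟨heBP, heL⟩, hm1, hm2⟩, hez⟩ := he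
          rw [hez] at hm1 hm2
          exact ⟨heBP, hm1, hm2⟩
        · intro e1 h1 e2 h2 heq
          simp only [Finset.mem_filter] at h1 h2
          exact Prod.ext heq (h1.2.trans h2.2.symm)
        · intro z hz
          simp only [Finset.mem_filter] at hz
          refine ⟨(z, q), Finset.mem_filter.mpr ⟨?_, rfl⟩, rfl⟩
          rw [hIncdef, Finset.mem_filter, Finset.mem_product]
          exact ⟨⟨hz.1, hq⟩, hz.2.1, hz.2.2⟩
      rw [hcard_eq, hBPdef]
      exact h4
    calc 4 * Lost.card = ∑ _q ∈ Lost, 4 := by rw [Finset.sum_const, smul_eq_mul, mul_comm]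
      _ ≤ ∑ q ∈ Lost, (Inc.filter (fun e => e.2 = q)).card := Finset.sum_le_sum hfib
  have hLostLt : Lost.card < k * T.card := by
    have hst : S.card - 2 < T.card := by omega
    have hBk : B ≤ 2 * k := by
      rcases le_total R B with h | h
      · have : k = R := min_eq_left h
        omega
      · have : k = B := min_eq_right h
        omega
    have hk1 : 1 ≤ k := by
      have h1 : k = min R B := hkdef
      rcases le_total R B with h | h
      · rw [min_eq_left h] at h1
        omega
      · rw [min_eq_right h] at h1
        omega
    have hchain : 4 * Lost.card < 4 * (k * T.card) := by
      calc 4 * Lost.card ≤ Inc.card := hIncLower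
        _ ≤ 2 * B * (S.card - 2) := hIncUpper
        _ ≤ 4 * k * (S.card - 2) := Nat.mul_le_mul_right _ (by omega)
        _ < 4 * k * T.card := mul_lt_mul_of_pos_left hst (by omega)
        _ = 4 * (k * T.card) := by ring
    omega
    -- ============ triangles : gained ============
  set ι : V → V ⊕ Fin p × Bool := Sum.inl with hιdef
  have hι : Function.Injective ι := Sum.inl_injective
  set A1 := Surv.image (fun q => q.image ι) with hA1def
  set A2 := (R' ×ˢ T).image (fun z : Finset V × V => (insert z.2 z.1).image ι) with hA2def
  have hA1card : A1.card = Surv.card :=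
    Finset.card_image_of_injective _ (Finset.image_injective hι)
  have hA1sub : A1 ⊆ G'.cliqueFinset 3 := by
    intro w hw
    rw [hA1def, Finset.mem_image] at hw
    obtain ⟨q, hq, rfl⟩ := hw
    have hqS := hq
    rw [hSurvdef, Finset.mem_filter] at hqS
    obtain ⟨hqG3, hnoblue⟩ := hqS
    have hqNC : G.IsNClique 3 q :=
      SimpleGraph.mem_cliqueFinset_iff.mp (by rw [← hG3def]; exact hqG3)
    rw [SimpleGraph.mem_cliqueFinset_iff]
    constructor
    · intro w1 hw1 w2 hw2 hne
      rw [Finset.mem_coe, Finset.mem_image] at hw1 hw2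
      obtain ⟨a, ha, rfl⟩ := hw1
      obtain ⟨b, hb, rfl⟩ := hw2
      have hab : a ≠ b := fun h => hne (by rw [h])
      rw [hG'def, hιdef]
      rw [foldGraph_adj_inl]
      exact ⟨hab, Or.inl ⟨hqNC.isClique (by simpa using ha) (by simpa using hb) hab,
        hnoblue a ha b hb⟩⟩
    · rw [Finset.card_image_of_injective _ hι]
      exact hqNC.card_eq
  have hA2sub : A2 ⊆ G'.cliqueFinset 3 := by
    intro w hw
    rw [hA2def, Finset.mem_image] at hw
    obtain ⟨⟨q, v⟩, hqv, rfl⟩ := hw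
    rw [Finset.mem_product] at hqv
    obtain ⟨hqR', hvT⟩ := hqv
    obtain ⟨h2, hqsub, hna⟩ := mem_redPairs_elim (hR'sub hqR')
    have hvq : v ∉ q := by
      intro hvq
      exact (Finset.disjoint_left.mp (disjoint_T_S G T) hvT) (hqsub hvq)
    rw [SimpleGraph.mem_cliqueFinset_iff]
    constructor
    · intro w1 hw1 w2 hw2 hne
      rw [Finset.mem_coe, Finset.mem_image] at hw1 hw2
      obtain ⟨a, ha, rfl⟩ := hw1
      obtain ⟨b, hb, rfl⟩ := hw2
      have hab : a ≠ b := fun h => hne (by rw [h])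
      rw [hG'def, hιdef, foldGraph_adj_inl]
      refine ⟨hab, ?_⟩
      rcases Finset.mem_insert.mp ha with rfl | haq
      · rcases Finset.mem_insert.mp hb with rfl | hbq
        · exact absurd rfl hab
        · -- a = v ∈ T, b ∈ q ⊆ S
          have hbS : b ∈ commonNbrs G T := hqsub hbq
          exact Or.inl ⟨(mem_commonNbrs_iff.mp hbS a hvT),
            not_blue_of_mem_TS (Finset.mem_union_left _ hvT) (Finset.mem_union_right _ hbS)⟩
      · rcases Finset.mem_insert.mp hb with rfl | hbq
        · have haS : a ∈ commonNbrs G T := hqsub haq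
          exact Or.inl ⟨(mem_commonNbrs_iff.mp haS b hvT).symm,
            not_blue_of_mem_TS (Finset.mem_union_right _ haS) (Finset.mem_union_left _ hvT)⟩
        · -- both in q, so {a,b} = q ∈ R'
          have hsub2 : ({a, b} : Finset V) ⊆ q := by
            intro x hx
            rcases Finset.mem_insert.mp hx with rfl | hx
            · exact haq
            · rwa [Finset.mem_singleton.mp hx]
          have hcard2 : ({a, b} : Finset V).card = 2 := by
            rw [Finset.card_insert_of_notMem (by simpa using hab), Finset.card_singleton]
          have : ({a, b} : Finset V) = q :=
            Finset.eq_of_subset_of_card_le hsub2 (by rw [hcard2, h2])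
          exact Or.inr (by rw [this]; exact hqR')
    · rw [Finset.card_image_of_injective _ hι, Finset.card_insert_of_notMem hvq, h2]
  have hA2card : A2.card = k * T.card := by
    rw [hA2def, Finset.card_image_of_injOn, Finset.card_product, hR'card]
    intro z1 hz1 z2 hz2 heq
    rw [Finset.mem_coe, Finset.mem_product] at hz1 hz2
    have heq2 : insert z1.2 z1.1 = insert z2.2 z2.1 := Finset.image_injective hι heq
    have hq1sub := (mem_redPairs_elim (hR'sub hz1.1)).2.1
    have hq2sub := (mem_redPairs_elim (hR'sub hz2.1)).2.1
    have hvv : z1.2 = z2.2 := by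
      have h1 : z1.2 ∈ insert z2.2 z2.1 := by rw [← heq2]; exact Finset.mem_insert_self _ _
      rcases Finset.mem_insert.mp h1 with h | h
      · exact h
      · exact absurd (hq2sub h) (Finset.disjoint_left.mp (disjoint_T_S G T) hz1.2)
    have hv1q : z1.2 ∉ z1.1 := by
      intro hc
      exact (Finset.disjoint_left.mp (disjoint_T_S G T) hz1.2) (hq1sub hc)
    have hv2q : z2.2 ∉ z2.1 := by
      intro hc
      exact (Finset.disjoint_left.mp (disjoint_T_S G T) hz2.2) (hq2sub hc)
    have hqq : z1.1 = z2.1 := by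
      have e1 : (insert z1.2 z1.1).erase z1.2 = z1.1 := Finset.erase_insert hv1q
      have e2 : (insert z2.2 z2.1).erase z2.2 = z2.1 := Finset.erase_insert hv2q
      rw [← e1, ← e2, heq2, hvv]
    exact Prod.ext hqq hvv
  have hdisj12 : Disjoint A1 A2 := by
    rw [Finset.disjoint_left]
    intro w hw1 hw2
    rw [hA1def, Finset.mem_image] at hw1
    rw [hA2def, Finset.mem_image] at hw2
    obtain ⟨q, hqSurv, rfl⟩ := hw1
    obtain ⟨⟨q', v⟩, hq'v, heq⟩ := hw2
    rw [Finset.mem_product] at hq'v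
    have heq2 : insert v q' = q := Finset.image_injective hι heq
    rw [hSurvdef, Finset.mem_filter] at hqSurv
    have hqNC : G.IsNClique 3 q :=
      SimpleGraph.mem_cliqueFinset_iff.mp (by rw [← hG3def]; exact hqSurv.1)
    obtain ⟨h2, hqsub, hna⟩ := mem_redPairs_elim (hR'sub hq'v.1)
    obtain ⟨a, b, hab, hq'ab⟩ := Finset.card_eq_two.mp h2
    have hq'ab' : q' = {a, b} := hq'ab
    have haq : a ∈ q := by
      rw [← heq2]
      exact Finset.mem_insert_of_mem (by rw [hq'ab']; simp)
    have hbq : b ∈ q := by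
      rw [← heq2]
      exact Finset.mem_insert_of_mem (by rw [hq'ab']; simp)
    have hadj : G.Adj a b := hqNC.isClique (by simpa using haq) (by simpa using hbq) hab
    exact hna a (by rw [hq'ab]; simp) b (by rw [hq'ab]; simp) hab hadj
  have hgain : Surv.card + k * T.card ≤ (G'.cliqueFinset 3).card := by
    rw [← hA1card, ← hA2card, ← Finset.card_union_of_disjoint hdisj12]
    exact Finset.card_le_card (Finset.union_subset hA1sub hA2sub)
  have hG3lt : (G.cliqueFinset 3).card < (G'.cliqueFinset 3).card := by
    rw [← hG3def]
    omega
  -- ============ transport to Fin n ============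
  set en := Fintype.equivFin (V ⊕ Fin p × Bool) with hendef
  set G'' := SimpleGraph.comap (⇑en.symm) G' with hG''def
  have hnbr'' : ∀ i, G''.neighborFinset i = (G'.neighborFinset (en.symm i)).image en := by
    intro i
    ext j
    rw [SimpleGraph.mem_neighborFinset, Finset.mem_image]
    constructor
    · intro hadj
      exact ⟨en.symm j, (SimpleGraph.mem_neighborFinset _ _ _).mpr hadj, by simp⟩
    · rintro ⟨w, hw, rfl⟩
      rw [SimpleGraph.mem_neighborFinset] at hw
      rw [hG''def]
      simpa using hw
  have hdeg'' : ∀ i, G''.degree i = G'.degree (en.symm i) := by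
    intro i
    rw [← SimpleGraph.card_neighborFinset_eq_degree, ← SimpleGraph.card_neighborFinset_eq_degree,
      hnbr'', Finset.card_image_of_injective _ en.injective]
  have hE'' : G''.edgeFinset.card = m := by
    have h1 := G''.sum_degrees_eq_twice_card_edges
    have h2 := G'.sum_degrees_eq_twice_card_edges
    have h3 : ∑ i, G''.degree i = ∑ w, G'.degree w := by
      rw [Finset.sum_congr rfl (fun i _ => hdeg'' i)]
      exact Equiv.sum_comp en.symm (fun w => G'.degree w)
    omega
  have hmax'' : G''.maxDegree ≤ r := by
    apply SimpleGraph.maxDegree_le_of_forall_degree_le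
    intro i
    rw [hdeg'']
    exact hdeg' _
  have hclq'' : (G'.cliqueFinset 3).card = (G''.cliqueFinset 3).card := by
    apply Finset.card_bij (fun q _ => q.image en)
    · intro q hq
      rw [SimpleGraph.mem_cliqueFinset_iff] at hq ⊢
      constructor
      · intro w1 hw1 w2 hw2 hne
        rw [Finset.mem_coe, Finset.mem_image] at hw1 hw2
        obtain ⟨a, ha, rfl⟩ := hw1
        obtain ⟨b, hb, rfl⟩ := hw2
        have hab : a ≠ b := fun h => hne (by rw [h])
        have := hq.isClique (by simpa using ha) (by simpa using hb) hab
        rw [hG''def]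
        simpa using this
      · rw [Finset.card_image_of_injective _ en.injective]
        exact hq.card_eq
    · intro q1 h1 q2 h2 heq
      exact Finset.image_injective en.injective heq
    · intro q'' hq''
      refine ⟨q''.image en.symm, ?_, by
        rw [Finset.image_image]
        simp⟩
      rw [SimpleGraph.mem_cliqueFinset_iff] at hq'' ⊢
      constructor
      · intro w1 hw1 w2 hw2 hne
        rw [Finset.mem_coe, Finset.mem_image] at hw1 hw2
        obtain ⟨a, ha, rfl⟩ := hw1
        obtain ⟨b, hb, rfl⟩ := hw2
        have hab : a ≠ b := fun h => hne (by rw [h])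
        have := hq''.isClique (by simpa using ha) (by simpa using hb) hab
        rw [hG''def] at this
        exact this
      · rw [Finset.card_image_of_injective _ en.symm.injective]
        exact hq''.card_eq
  exact ⟨Fintype.card (V ⊕ Fin p × Bool), G'', hE'', hmax'', by convert hG3lt using 1; convert hclq''.symm⟩
end

section
/- Let r ≥ 1, let s and t be positive integers with s + t = r + 1, and let R be a finite simple graph on s vertices with minimum degree at least 1 and maximum degree at most 2. Then Q(R) = (r + 1 − s)·e(R) + k_3(R) − Σ_{v ∈ R} C(d_R(v), 2) ≥ 0, with equality only when t = 1 and R is a disjoint union of cycles of length at least 4. -/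
open scoped Classical
open Finset

/-- `Q(R) = (r + 1 − s)·e(R) + k₃(R) − Σ_{v ∈ R} C(d_R(v), 2)` for a graph `R` on `s`
vertices, as an integer. -/
noncomputable def Qval (r : ℕ) {V : Type} [Fintype V] [DecidableEq V]
    (R : SimpleGraph V) : ℤ :=
  ((r : ℤ) + 1 - (Fintype.card V : ℤ)) * (R.edgeFinset.card : ℤ) +
    ((R.cliqueFinset 3).card : ℤ) - ∑ v, (((R.degree v).choose 2 : ℕ) : ℤ)

/-- Let `s + t = r + 1` with `s, t ≥ 1`, and let `R` be a graph on `s` vertices with minimum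
degree at least `1` and maximum degree at most `2`.  Then `Q(R) ≥ 0`, with equality only when
`t = 1` and `R` is a disjoint union of cycles of length at least `4` (equivalently, `R` is
`2`-regular and triangle-free). -/
theorem Qval_nonneg_of_maxDegree_two {V : Type} [Fintype V] [DecidableEq V]
    (r s t : ℕ) (hr : 1 ≤ r) (hs : 1 ≤ s) (ht : 1 ≤ t) (hst : s + t = r + 1)
    (hV : Fintype.card V = s)
    (R : SimpleGraph V)
    (hδ : ∀ v : V, 1 ≤ R.degree v) (hΔ : ∀ v : V, R.degree v ≤ 2) :
    0 ≤ Qval r R ∧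
      (Qval r R = 0 →
        t = 1 ∧ (∀ v : V, R.degree v = 2) ∧ (R.cliqueFinset 3).card = 0) := by
  set e : ℕ := R.edgeFinset.card with he
  set K : ℕ := (R.cliqueFinset 3).card with hK
  have hdegsum : ∑ v, R.degree v = 2 * e := R.sum_degrees_eq_twice_card_edges
  -- sum of degrees bounds
  have hlow : s ≤ 2 * e := by
    calc s = ∑ _v : V, 1 := by simp [hV]
    _ ≤ ∑ v, R.degree v := Finset.sum_le_sum fun v _ => hδ v
    _ = 2 * e := hdegsum
  have hhigh : 2 * e ≤ 2 * s := by
    calc 2 * e = ∑ v, R.degree v := hdegsum.symm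
    _ ≤ ∑ _v : V, 2 := Finset.sum_le_sum fun v _ => hΔ v
    _ = 2 * s := by simp [hV, mul_comm]
  have he1 : 1 ≤ e := by omega
  have hes : e ≤ s := by omega
  -- the sum of choose(deg,2)
  have hsumchoose : ∑ v, (((R.degree v).choose 2 : ℕ) : ℤ) = 2 * e - s := by
    have : ∀ v : V, (((R.degree v).choose 2 : ℕ) : ℤ) = (R.degree v : ℤ) - 1 := by
      intro v
      have h1 := hδ v; have h2 := hΔ v
      have : R.degree v = 1 ∨ R.degree v = 2 := by omega
      rcases this with h | h <;> rw [h] <;> norm_num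
    rw [Finset.sum_congr rfl fun v _ => this v, Finset.sum_sub_distrib]
    have : ∑ v, ((R.degree v : ℤ)) = 2 * e := by
      exact_mod_cast hdegsum
    rw [this]
    simp [hV]
  have hQ : Qval r R = (t : ℤ) * e + K - (2 * e - s) := by
    have hts : (r : ℤ) + 1 - s = t := by
      have : (s : ℤ) + t = r + 1 := by exact_mod_cast hst
      linarith
    rw [Qval, hV, hsumchoose, hts, ← he, ← hK]
  have hKnn : (0 : ℤ) ≤ K := Int.natCast_nonneg K
  have ht1 : (1 : ℤ) ≤ t := by exact_mod_cast ht
  have hte : (e : ℤ) ≤ (t : ℤ) * e := by nlinarith [Int.natCast_nonneg e]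
  constructor
  · rw [hQ]
    have : (e : ℤ) ≤ s := by exact_mod_cast hes
    linarith
  · intro h0
    rw [hQ] at h0
    have hesZ : (e : ℤ) ≤ s := by exact_mod_cast hes
    have he1Z : (1 : ℤ) ≤ e := by exact_mod_cast he1
    have htle : (t : ℤ) - 1 ≤ ((t : ℤ) - 1) * e := by nlinarith
    have htZ : (t : ℤ) = 1 := by nlinarith
    have ht' : t = 1 := by exact_mod_cast htZ
    have h0' : (e : ℤ) + K - (2 * e - s) = 0 := by rw [htZ] at h0; linarith
    have hKe : (K : ℤ) = 0 ∧ (e : ℤ) = s := by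
      constructor <;> linarith
    have hK0 : K = 0 := by exact_mod_cast hKe.1
    have hesEq : e = s := by exact_mod_cast hKe.2
    refine ⟨ht', ?_, hK0⟩
    -- all degrees equal 2
    intro v
    by_contra hv
    have hv' : R.degree v < 2 := lt_of_le_of_ne (hΔ v) hv
    have : ∑ w, R.degree w < ∑ _w : V, 2 := by
      apply Finset.sum_lt_sum (fun w _ => hΔ w) ⟨v, Finset.mem_univ v, hv'⟩
    rw [hdegsum, hesEq] at this
    simp [hV, mul_comm] at this
end

section
/- Let r ≥ 1, m ≥ C(r+1,2) + 1, and k = ⌈r/2⌉. Define the weight function w on {0, 1, …, r} by w(d) = C(d,2) for d ≤ r−1 and w(r) = C(r,2) − k. Then for every finite multiset D of integers from {0, 1, …, r} with Σ_{d ∈ D} d = 2m, one has Σ_{d ∈ D} w(d) ≤ (r − 2)·m; that is, 3·M_k(m,r) ≤ (r − 2)·m. -/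
lemma two_mul_choose_two (n : ℕ) : 2 * n.choose 2 = n * (n - 1) := by
  cases n with
  | zero => simp
  | succ m =>
    have h : 2 ∣ m * (m + 1) := (Nat.even_mul_succ_self m).two_dvd
    rw [Nat.choose_two_right]
    simp only [Nat.add_sub_cancel]
    rw [show (m + 1) * m = m * (m + 1) from Nat.mul_comm _ _]
    exact Nat.mul_div_cancel' h

lemma pointwise_bound (r d : ℕ) (hr : 1 ≤ r) (hd : d ≤ r) :
    2 * (if d = r then (r.choose 2 : ℤ) - (((r + 1) / 2 : ℕ) : ℤ)
      else ((d.choose 2 : ℕ) : ℤ)) ≤ ((r : ℤ) - 2) * (d : ℤ) := by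
  have hc : ∀ n : ℕ, 1 ≤ n → (2 : ℤ) * (n.choose 2 : ℤ) = (n : ℤ) * ((n : ℤ) - 1) := by
    intro n hn
    have := two_mul_choose_two n
    have h1 : ((n - 1 : ℕ) : ℤ) = (n : ℤ) - 1 := by
      push_cast [Nat.cast_sub hn]; ring
    calc (2 : ℤ) * (n.choose 2 : ℤ) = ((2 * n.choose 2 : ℕ) : ℤ) := by push_cast; ring
      _ = ((n * (n - 1) : ℕ) : ℤ) := by rw [this]
      _ = (n : ℤ) * ((n : ℤ) - 1) := by push_cast [h1]; ring
  split_ifs with h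
  · subst h
    have h1 := hc d hr
    have h2 : (d : ℤ) ≤ 2 * (((d + 1) / 2 : ℕ) : ℤ) := by
      have : d ≤ 2 * ((d + 1) / 2) := by omega
      exact_mod_cast this
    nlinarith [h2]
  · rcases Nat.eq_zero_or_pos d with h0 | h0
    · subst h0; simp
    · have h1 := hc d h0
      have h2 : (d : ℤ) - 1 ≤ (r : ℤ) - 2 := by
        have hr' : d + 1 ≤ r := by omega
        have : ((d : ℤ) + 1) ≤ (r : ℤ) := by exact_mod_cast hr'
        linarith
      have hd' : (0 : ℤ) ≤ (d : ℤ) := Nat.cast_nonneg d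
      nlinarith

/-- Degree multiset optimization: for `r ≥ 1`, `m ≥ C(r+1,2) + 1` and `k = ⌈r/2⌉`, with the
weight function `w(d) = C(d,2)` for `d ≤ r − 1` and `w(r) = C(r,2) − k`, every finite multiset
`D` with entries in `{0, 1, …, r}` and `Σ_{d ∈ D} d = 2m` satisfies
`Σ_{d ∈ D} w(d) ≤ (r − 2)·m`, i.e. `3·M_k(m,r) ≤ (r − 2)·m`. -/
theorem multiset_weight_bound (r m : ℕ) (hr : 1 ≤ r) (hm : (r + 1).choose 2 + 1 ≤ m)
    (D : Multiset ℕ) (hD : ∀ d ∈ D, d ≤ r) (hsum : D.sum = 2 * m) :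
    (D.map (fun d => if d = r then (r.choose 2 : ℤ) - (((r + 1) / 2 : ℕ) : ℤ)
      else ((d.choose 2 : ℕ) : ℤ))).sum ≤ ((r : ℤ) - 2) * (m : ℤ) := by
  set w : ℕ → ℤ := fun d => if d = r then (r.choose 2 : ℤ) - (((r + 1) / 2 : ℕ) : ℤ)
      else ((d.choose 2 : ℕ) : ℤ) with hw
  have key : 2 * (D.map w).sum ≤ ((r : ℤ) - 2) * (2 * (m : ℤ)) := by
    have h1 : (D.map (fun d => 2 * w d)).sum ≤ (D.map (fun d : ℕ => ((r : ℤ) - 2) * (d : ℤ))).sum := by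
      apply Multiset.sum_map_le_sum_map
      intro d hd
      exact pointwise_bound r d hr (hD d hd)
    have h2 : (D.map (fun d => 2 * w d)).sum = 2 * (D.map w).sum := by
      rw [Multiset.sum_map_mul_left]
    have h3 : (D.map (fun d : ℕ => ((r : ℤ) - 2) * (d : ℤ))).sum
        = ((r : ℤ) - 2) * (D.map (fun d : ℕ => (d : ℤ))).sum := by
      rw [Multiset.sum_map_mul_left]
    have h4 : (D.map (fun d : ℕ => (d : ℤ))).sum = ((D.sum : ℕ) : ℤ) := by
      simp [Nat.cast_multiset_sum]
    rw [h2, h3, h4, hsum] at h1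
    push_cast at h1
    linarith
  linarith
end
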